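/- Let m be an order function on ℝ^d, let N be a tempered positive Radon measure on ℝ^d, and let ρ be a nonnegative Schwartz-class function on ℝ^d with ∫_{ℝ^d} ρ(x) dx = 1 and ρ(0) > 0, such that N*ρ(x) ≤ m(x) for all x ∈ ℝ^d. Then there exists a constant C > 0, independent of Ω, such that for every Borel set Ω ⊆ ℝ^d one has ∫_Ω ∫_{Ωᶜ} ρ(x − y) dN(y) dx ≤ C ∫_{∂Ω^{[−1,1]}} m(x) dx. -/

import Mathlib

open MeasureTheory Metric Set
open scoped ENNReal NNReal

noncomputable section

/-- An order function on a normed space: positive, with polynomially controlled variation. -/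
def IsOrderFunction {E : Type*} [NormedAddCommGroup E] (m : E → ℝ) : Prop :=
  (∀ x, 0 < m x) ∧ ∃ C ν : ℝ, 0 < C ∧ 0 ≤ ν ∧
    ∀ x y, m x ≤ C * (1 + ‖x - y‖) ^ ν * m y

/-- A tempered measure: `∫ (1+|y|)^{-k} dN(y) < ∞` for some `k ≥ 0`. -/
def IsTempered {d : ℕ} (N : Measure (EuclideanSpace ℝ (Fin d))) : Prop :=
  ∃ k : ℝ, 0 ≤ k ∧ ∫⁻ y, ENNReal.ofReal ((1 + ‖y‖) ^ (-k)) ∂N < ⊤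

/-- The convolution `N * ρ (x) = ∫ ρ(x - y) dN(y)`. -/
def mconv {d : ℕ} (N : Measure (EuclideanSpace ℝ (Fin d)))
    (ρ : EuclideanSpace ℝ (Fin d) → ℝ) (x : EuclideanSpace ℝ (Fin d)) : ℝ :=
  ∫ y, ρ (x - y) ∂N

/-- `∂Ω^{[a,b]}` for `0 ≤ a ≤ b`: points of `closure Ωᶜ` at distance in `[a,b]` from `Ω`. -/
def outerThick {d : ℕ} (Ω : Set (EuclideanSpace ℝ (Fin d))) (a b : ℝ) :
    Set (EuclideanSpace ℝ (Fin d)) :=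
  {x | x ∈ closure Ωᶜ ∧ a ≤ infDist x Ω ∧ infDist x Ω ≤ b}

/-- `∂Ω^{[-b,-a]}` for `0 ≤ a ≤ b`: points of `closure Ω` at distance in `[a,b]` from `Ωᶜ`. -/
def innerThick {d : ℕ} (Ω : Set (EuclideanSpace ℝ (Fin d))) (a b : ℝ) :
    Set (EuclideanSpace ℝ (Fin d)) :=
  {x | x ∈ closure Ω ∧ a ≤ infDist x Ωᶜ ∧ infDist x Ωᶜ ≤ b}

/-- `∂Ω^{[-1,1]}`, the unit thickening of the boundary of `Ω`. -/
def unitThick {d : ℕ} (Ω : Set (EuclideanSpace ℝ (Fin d))) :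
    Set (EuclideanSpace ℝ (Fin d)) :=
  innerThick Ω 0 1 ∪ outerThick Ω 0 1

/-! ### Auxiliary material for the proof -/

lemma CTB_real_aux {p : ℕ} {s t c : ℝ} (hs : 0 ≤ s) (ht : 0 ≤ t) (hc : 0 ≤ c)
    (h : 1 + t ≤ c * (1 + s)) :
    ((1 + s) ^ p)⁻¹ ≤ c ^ p * ((1 + t) ^ p)⁻¹ := by
  have hps : (0:ℝ) < (1 + s) ^ p := by positivity
  have hpt : (0:ℝ) < (1 + t) ^ p := by positivity
  have h2 : (1 + t) ^ p ≤ c ^ p * (1 + s) ^ p := by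
    calc (1 + t) ^ p ≤ (c * (1 + s)) ^ p := pow_le_pow_left₀ (by positivity) h p
    _ = c ^ p * (1 + s) ^ p := mul_pow c (1+s) p
  rw [show ((1 + s) ^ p)⁻¹ = 1 / (1 + s)^p by rw [one_div],
    show c ^ p * ((1 + t) ^ p)⁻¹ = c ^ p / (1 + t)^p by rw [div_eq_mul_inv],
    div_le_div_iff₀ hps hpt]
  linarith

/-- auxiliary kernel `(1+dist x y)^{-p}` -/
def CTBker {E : Type*} [PseudoMetricSpace E] (p : ℕ) (x y : E) : ℝ≥0∞ :=
  ENNReal.ofReal (((1 + dist x y) ^ p)⁻¹)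

lemma CTBker_aux {p : ℕ} {s t c : ℝ} (hs : 0 ≤ s) (ht : 0 ≤ t) (hc : 0 ≤ c)
    (h : 1 + t ≤ c * (1 + s)) :
    ENNReal.ofReal (((1 + s) ^ p)⁻¹) ≤
      ENNReal.ofReal (c ^ p) * ENNReal.ofReal (((1 + t) ^ p)⁻¹) := by
  rw [← ENNReal.ofReal_mul (by positivity)]
  exact ENNReal.ofReal_le_ofReal (CTB_real_aux hs ht hc h)

lemma CTBker_add {E : Type*} [PseudoMetricSpace E] (p q : ℕ) (x y : E) :
    CTBker (p + q) x y = CTBker p x y * CTBker q x y := by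
  unfold CTBker
  rw [← ENNReal.ofReal_mul (by positivity)]
  congr 1
  rw [pow_add, mul_inv]

lemma CTBker_transfer {E : Type*} [PseudoMetricSpace E] (p : ℕ) (x y w : E) :
    CTBker p x y ≤ ENNReal.ofReal ((1 + dist x w) ^ p) * CTBker p w y := by
  apply CTBker_aux dist_nonneg dist_nonneg (by have := dist_nonneg (x := x) (y := w); linarith)
  calc 1 + dist w y ≤ 1 + (dist w x + dist x y) := by linarith [dist_triangle w x y]
  _ ≤ (1 + dist x w) * (1 + dist x y) := by
      rw [dist_comm w x]
      nlinarith [dist_nonneg (x := x) (y := w), dist_nonneg (x := x) (y := y)]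

lemma CTBker_near {E : Type*} [PseudoMetricSpace E] (p : ℕ) {x y u : E} {r : ℝ} (hr : 0 ≤ r)
    (h : dist u y ≤ r) :
    CTBker p x y ≤ ENNReal.ofReal ((1 + r) ^ p) * CTBker p x u := by
  apply CTBker_aux dist_nonneg dist_nonneg (by linarith)
  calc 1 + dist x u ≤ 1 + (dist x y + dist y u) := by linarith [dist_triangle x y u]
  _ ≤ (1 + r) * (1 + dist x y) := by
      rw [dist_comm y u]
      nlinarith [dist_nonneg (x := x) (y := y)]

lemma CTBker_two {E : Type*} [PseudoMetricSpace E] (p : ℕ) {x y w : E}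
    (h : dist w x ≤ dist x y + 1) :
    CTBker p x y ≤ ENNReal.ofReal (2 ^ p) * CTBker p x w := by
  apply CTBker_aux dist_nonneg dist_nonneg (by norm_num)
  rw [dist_comm x w]
  nlinarith [dist_nonneg (x := x) (y := y)]

lemma CTBker_continuous {E : Type*} [PseudoMetricSpace E] (p : ℕ) :
    Continuous (fun q : E × E => CTBker p q.1 q.2) := by
  apply ENNReal.continuous_ofReal.comp
  apply Continuous.inv₀
  · exact (continuous_const.add continuous_dist).pow p
  · intro q
    have := dist_nonneg (x := q.1) (y := q.2)
    positivity

lemma CTBker_measurable_snd {E : Type*} [PseudoMetricSpace E] [MeasurableSpace E]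
    [OpensMeasurableSpace E] (p : ℕ) (x : E) : Measurable (fun y => CTBker p x y) :=
  ((CTBker_continuous p).comp (Continuous.prodMk_right x)).measurable

lemma CTBker_measurable_fst {E : Type*} [PseudoMetricSpace E] [MeasurableSpace E]
    [OpensMeasurableSpace E] (p : ℕ) (w : E) : Measurable (fun x => CTBker p x w) :=
  ((CTBker_continuous p).comp (continuous_id.prodMk continuous_const)).measurable

lemma my_schwartz_decay' {E : Type*} [NormedAddCommGroup E] [NormedSpace ℝ E]
    (ρ : SchwartzMap E ℝ) (M : ℕ) :
    ∃ D : ℝ, 0 < D ∧ ∀ z, ‖ρ z‖ ≤ D * ((1 + ‖z‖) ^ M)⁻¹ := by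
  set S : ℝ := 2 ^ M * (Finset.Iic (M, 0)).sup (fun m => SchwartzMap.seminorm ℝ m.1 m.2) ρ with hS
  have hS0 : (0:ℝ) ≤ S := by positivity
  refine ⟨S + 1, by linarith, ?_⟩
  intro z
  have h := SchwartzMap.one_add_le_sup_seminorm_apply (𝕜 := ℝ) (m := (M, 0)) le_rfl le_rfl ρ z
  rw [norm_iteratedFDeriv_zero] at h
  have hpos : (0:ℝ) < (1 + ‖z‖) ^ M := by positivity
  rw [le_mul_inv_iff₀ hpos]
  calc ‖ρ z‖ * (1+‖z‖)^M = (1+‖z‖)^M * ‖ρ z‖ := by ring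
  _ ≤ S := h
  _ ≤ S + 1 := by linarith

lemma my_cross {E : Type*} [NormedAddCommGroup E] [NormedSpace ℝ E]
    {Ω : Set E} {x y : E} (hx : x ∈ Ω) (hy : y ∈ Ωᶜ) :
    ∃ z, z ∈ closure Ω ∧ z ∈ closure Ωᶜ ∧ dist x z ≤ dist x y := by
  have hdseg : ∀ p ∈ segment ℝ x y, dist x p ≤ dist x y := by
    intro p hp
    obtain ⟨a, b, ha, hb, hab, hp'⟩ := hp
    have hxp : x - p = b • (x - y) := by
      rw [← hp']
      have : a = 1 - b := by linarith
      rw [this]; rw [smul_sub]; rw [sub_smul, one_smul]; abel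
    rw [dist_eq_norm, hxp, norm_smul, dist_eq_norm]
    simp only [Real.norm_eq_abs, abs_of_nonneg hb]
    nlinarith [norm_nonneg (x - y)]
  by_cases hxc : x ∈ closure Ωᶜ
  · exact ⟨x, subset_closure hx, hxc, by simp [dist_nonneg]⟩
  by_cases hyc : y ∈ closure Ω
  · exact ⟨y, hyc, subset_closure hy, le_refl _⟩
  by_contra hcon
  push_neg at hcon
  have hseg : IsPreconnected (segment ℝ x y) := (convex_segment x y).isPreconnected
  have h1 : segment ℝ x y ⊆ (closure Ωᶜ)ᶜ ∪ (closure Ω)ᶜ := by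
    intro p hp
    by_contra hp2
    simp only [mem_union, mem_compl_iff, not_or, not_not] at hp2
    exact absurd (hcon p hp2.2 hp2.1) (not_lt.mpr (hdseg p hp))
  have h2 : (segment ℝ x y ∩ (closure Ωᶜ)ᶜ).Nonempty :=
    ⟨x, left_mem_segment ℝ x y, hxc⟩
  have h3 : (segment ℝ x y ∩ (closure Ω)ᶜ).Nonempty :=
    ⟨y, right_mem_segment ℝ x y, hyc⟩
  obtain ⟨p, -, hpu, hpv⟩ := hseg _ _ (isClosed_closure.isOpen_compl)
    (isClosed_closure.isOpen_compl) h1 h2 h3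
  rcases (em (p ∈ Ω)) with hpΩ | hpΩ
  · exact hpv (subset_closure hpΩ)
  · exact hpu (subset_closure hpΩ)

lemma my_measurable_unitThick {d : ℕ} (Ω : Set (EuclideanSpace ℝ (Fin d))) :
    MeasurableSet (unitThick Ω) := by
  have h : ∀ (s : Set (EuclideanSpace ℝ (Fin d))) (t : Set (EuclideanSpace ℝ (Fin d))),
      MeasurableSet {x | x ∈ closure s ∧ 0 ≤ infDist x t ∧ infDist x t ≤ 1} := by
    intro s t
    have : {x | x ∈ closure s ∧ 0 ≤ infDist x t ∧ infDist x t ≤ 1}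
        = closure s ∩ ((fun x => infDist x t) ⁻¹' (Icc 0 1)) := by
      ext x
      simp only [mem_setOf_eq, mem_inter_iff, mem_preimage, mem_Icc]
    rw [this]
    exact isClosed_closure.measurableSet.inter
      ((continuous_infDist_pt t).measurable measurableSet_Icc)
  exact (h Ω Ωᶜ).union (h Ωᶜ Ω)

lemma my_ball_subset {d : ℕ} {Ω : Set (EuclideanSpace ℝ (Fin d))} {z : EuclideanSpace ℝ (Fin d)}
    (hz1 : z ∈ closure Ω) (hz2 : z ∈ closure Ωᶜ) :
    closedBall z (1/2) ⊆ unitThick Ω := by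
  intro w hw
  have hwz : dist w z ≤ 1/2 := mem_closedBall.mp hw
  have hz1' : infDist z Ω = 0 := infDist_zero_of_mem_closure hz1
  have hz2' : infDist z Ωᶜ = 0 := infDist_zero_of_mem_closure hz2
  have h1 : infDist w Ω ≤ 1 := by
    have := infDist_le_infDist_add_dist (x := w) (y := z) (s := Ω)
    linarith
  have h2 : infDist w Ωᶜ ≤ 1 := by
    have := infDist_le_infDist_add_dist (x := w) (y := z) (s := Ωᶜ)
    linarith
  by_cases hw2 : w ∈ closure Ω
  · exact Or.inl ⟨hw2, infDist_nonneg, h2⟩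
  · refine Or.inr ⟨?_, infDist_nonneg, h1⟩
    have : w ∈ Ωᶜ := fun hcon => hw2 (subset_closure hcon)
    exact subset_closure this

lemma my_J_lt_top {d p : ℕ} (hp : d < p) :
    ∫⁻ z : EuclideanSpace ℝ (Fin d), ENNReal.ofReal (((1 + ‖z‖) ^ p)⁻¹) < ⊤ := by
  have h : Integrable (fun z : EuclideanSpace ℝ (Fin d) => (1 + ‖z‖) ^ (-(p : ℝ))) := by
    apply integrable_one_add_norm
    rw [finrank_euclideanSpace_fin]
    exact_mod_cast hp
  have h2 := h.hasFiniteIntegral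
  unfold HasFiniteIntegral at h2
  refine lt_of_le_of_lt (lintegral_mono fun z => ?_) h2
  have hb : (0:ℝ) < 1 + ‖z‖ := by positivity
  have : ((1 + ‖z‖) ^ p)⁻¹ = (1 + ‖z‖) ^ (-(p:ℝ)) := by
    rw [Real.rpow_neg hb.le, Real.rpow_natCast]
  rw [this]
  exact Real.ofReal_le_enorm _

lemma my_translate {d p : ℕ} (x : EuclideanSpace ℝ (Fin d)) :
    ∫⁻ u, ENNReal.ofReal (((1 + dist x u) ^ p)⁻¹) =
    ∫⁻ z : EuclideanSpace ℝ (Fin d), ENNReal.ofReal (((1 + ‖z‖) ^ p)⁻¹) := by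
  have := lintegral_sub_right_eq_self
    (μ := (volume : Measure (EuclideanSpace ℝ (Fin d))))
    (fun z => ENNReal.ofReal (((1 + ‖z‖) ^ p)⁻¹)) x
  rw [← this]
  congr 1
  ext u
  rw [dist_comm, dist_eq_norm]

lemma CTB_integrable {d : ℕ} {N : Measure (EuclideanSpace ℝ (Fin d))}
    (hN : IsTempered N) (ρ : SchwartzMap (EuclideanSpace ℝ (Fin d)) ℝ)
    (u : EuclideanSpace ℝ (Fin d)) :
    Integrable (fun y => ρ (u - y)) N := by
  obtain ⟨k, hk0, hNk⟩ := hN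
  set n : ℕ := ⌈k⌉₊ with hn
  obtain ⟨D, hD, hdec⟩ := my_schwartz_decay' ρ n
  have hg_int : Integrable (fun y : EuclideanSpace ℝ (Fin d) => (1 + ‖y‖) ^ (-k)) N := by
    constructor
    · apply Measurable.aestronglyMeasurable
      exact ((continuous_const.add continuous_norm).rpow_const
        (fun x => Or.inl (ne_of_gt (add_pos_of_pos_of_nonneg one_pos (norm_nonneg _))))).measurable
    · rw [HasFiniteIntegral]
      refine lt_of_le_of_lt (lintegral_mono fun y => ?_) hNk
      have h0 : (0:ℝ) ≤ (1 + ‖y‖) ^ (-k) := Real.rpow_nonneg (by positivity) _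
      exact le_of_eq (Real.enorm_eq_ofReal h0)
  refine ((hg_int.const_mul (D * (1 + ‖u‖) ^ n)).mono' ?_ ?_)
  · exact (ρ.continuous.comp (continuous_const.sub continuous_id)).aestronglyMeasurable
  · apply ae_of_all
    intro y
    calc ‖ρ (u - y)‖ ≤ D * ((1 + ‖u - y‖) ^ n)⁻¹ := hdec _
    _ ≤ D * ((1 + ‖u‖) ^ n * ((1 + ‖y‖) ^ n)⁻¹) := by
        apply mul_le_mul_of_nonneg_left ?_ hD.le
        apply CTB_real_aux (norm_nonneg _) (norm_nonneg _) (by positivity)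
        have hy : ‖y‖ ≤ ‖u‖ + ‖u - y‖ := by
          calc ‖y‖ = ‖u - (u - y)‖ := by congr 1; abel
          _ ≤ ‖u‖ + ‖u - y‖ := norm_sub_le u (u - y)
        nlinarith [norm_nonneg (u - y), norm_nonneg u]
    _ ≤ D * (1 + ‖u‖) ^ n * (1 + ‖y‖) ^ (-k) := by
        rw [mul_assoc]
        apply mul_le_mul_of_nonneg_left ?_ hD.le
        apply mul_le_mul_of_nonneg_left ?_ (by positivity)
        rw [Real.rpow_neg (by positivity)]
        apply inv_anti₀ (Real.rpow_pos_of_pos (by positivity) _)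
        rw [← Real.rpow_natCast (1 + ‖y‖) n]
        apply Real.rpow_le_rpow_of_exponent_le (by linarith [norm_nonneg y])
        exact Nat.le_ceil k

lemma CTB_lconv_le {d : ℕ} {N : Measure (EuclideanSpace ℝ (Fin d))}
    (hN : IsTempered N) {ρ : SchwartzMap (EuclideanSpace ℝ (Fin d)) ℝ}
    (hρpos : ∀ x, 0 ≤ ρ x) {m : EuclideanSpace ℝ (Fin d) → ℝ}
    (hbound : ∀ x, mconv N (fun z => ρ z) x ≤ m x)
    (u : EuclideanSpace ℝ (Fin d)) :
    ∫⁻ y, ENNReal.ofReal (ρ (u - y)) ∂N ≤ ENNReal.ofReal (m u) := by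
  rw [← MeasureTheory.ofReal_integral_eq_lintegral_ofReal (CTB_integrable hN ρ u)
    (ae_of_all _ fun y => hρpos _)]
  exact ENNReal.ofReal_le_ofReal (hbound u)

lemma CTB_ball_bound {d : ℕ} {N : Measure (EuclideanSpace ℝ (Fin d))}
    (hN : IsTempered N) {ρ : SchwartzMap (EuclideanSpace ℝ (Fin d)) ℝ}
    (hρpos : ∀ x, 0 ≤ ρ x) {m : EuclideanSpace ℝ (Fin d) → ℝ}
    (hbound : ∀ x, mconv N (fun z => ρ z) x ≤ m x) (hmpos : ∀ x, 0 < m x)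
    {r : ℝ} (hρ0 : 0 < ρ 0)
    (hball : ∀ z : EuclideanSpace ℝ (Fin d), ‖z‖ ≤ r → ρ 0 / 2 ≤ ρ z)
    (u : EuclideanSpace ℝ (Fin d)) :
    N (closedBall u r) ≤ ENNReal.ofReal ((2 / ρ 0) * m u) := by
  have key : ENNReal.ofReal (ρ 0 / 2) * N (closedBall u r) ≤ ENNReal.ofReal (m u) := by
    calc ENNReal.ofReal (ρ 0 / 2) * N (closedBall u r)
        = ∫⁻ _ in closedBall u r, ENNReal.ofReal (ρ 0 / 2) ∂N := (setLIntegral_const _ _).symm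
    _ ≤ ∫⁻ y in closedBall u r, ENNReal.ofReal (ρ (u - y)) ∂N := by
        apply setLIntegral_mono
          ((ENNReal.continuous_ofReal.comp
            (ρ.continuous.comp (continuous_const.sub continuous_id))).measurable)
        intro y hy
        apply ENNReal.ofReal_le_ofReal
        apply hball
        show ‖u - y‖ ≤ r
        rw [← dist_eq_norm, dist_comm]
        exact mem_closedBall.mp hy
    _ ≤ ∫⁻ y, ENNReal.ofReal (ρ (u - y)) ∂N := setLIntegral_le_lintegral _ _
    _ ≤ ENNReal.ofReal (m u) := CTB_lconv_le hN hρpos hbound u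
  have h2 : (ENNReal.ofReal (ρ 0 / 2)) ≠ 0 := by
    simp only [ne_eq, ENNReal.ofReal_eq_zero, not_le]; linarith
  rw [mul_comm] at key
  rw [← ENNReal.le_div_iff_mul_le (Or.inl h2) (Or.inl ENNReal.ofReal_ne_top)] at key
  refine le_trans key ?_
  rw [ENNReal.div_le_iff h2 ENNReal.ofReal_ne_top, ← ENNReal.ofReal_mul
    (by have h3 := (hmpos u).le; have h4 := hρ0; positivity)]
  apply ENNReal.ofReal_le_ofReal
  have : 2 / ρ 0 * m u * (ρ 0 / 2) = m u := by
    field_simp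
  rw [this]

/-- Key moment bound: if `N` of small balls is controlled by `m`,
then the `(ν' + d + 1)`-moment of `N` is controlled by `m`. -/
lemma CTB_poly_bound {d : ℕ} (N : Measure (EuclideanSpace ℝ (Fin d)))
    [SigmaFinite N]
    (m : EuclideanSpace ℝ (Fin d) → ℝ)
    {C₀ : ℝ} (hC₀ : 0 < C₀) {ν' : ℕ}
    (hord' : ∀ x y, m x ≤ C₀ * (1 + dist x y) ^ ν' * m y)
    {r c₃ : ℝ} (hr : 0 < r) (hc₃ : 0 ≤ c₃)
    (hB : ∀ u, N (closedBall u r) ≤ ENNReal.ofReal (c₃ * m u)) :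
    ∃ B₁ : ℝ≥0∞, B₁ ≠ ⊤ ∧ ∀ x,
      (∫⁻ y, CTBker (ν' + (d + 1)) x y ∂N) ≤ B₁ * ENNReal.ofReal (m x) := by
  classical
  set K₀ : ℕ := ν' + (d + 1) with hK₀
  set v : ℝ≥0∞ := volume (closedBall (0 : EuclideanSpace ℝ (Fin d)) r) with hv
  have hv0 : v ≠ 0 := (measure_closedBall_pos _ _ hr).ne'
  have hvt : v ≠ ⊤ := measure_closedBall_lt_top.ne
  set e : ℝ≥0∞ := ENNReal.ofReal ((1 + r) ^ K₀) with he
  set Jd : ℝ≥0∞ := ∫⁻ z : EuclideanSpace ℝ (Fin d), ENNReal.ofReal (((1 + ‖z‖) ^ (d+1))⁻¹)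
    with hJd
  have hJdt : Jd ≠ ⊤ := (my_J_lt_top (by omega)).ne
  refine ⟨(e * ENNReal.ofReal (c₃ * C₀) * Jd) / v, ?_, ?_⟩
  · apply ne_of_lt
    apply ENNReal.div_lt_top ?_ hv0
    exact ENNReal.mul_ne_top (ENNReal.mul_ne_top ENNReal.ofReal_ne_top ENNReal.ofReal_ne_top) hJdt
  intro x
  have hrearr : e * ENNReal.ofReal (c₃ * C₀) * Jd / v * ENNReal.ofReal (m x) =
      (e * (ENNReal.ofReal (c₃ * C₀) * Jd * ENNReal.ofReal (m x))) / v := by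
    rw [div_eq_mul_inv, div_eq_mul_inv]; ring
  rw [hrearr, ENNReal.le_div_iff_mul_le (Or.inl hv0) (Or.inl hvt)]
  set F : EuclideanSpace ℝ (Fin d) × EuclideanSpace ℝ (Fin d) → ℝ≥0∞ :=
    fun p => if dist p.2 p.1 ≤ r then CTBker K₀ x p.2 else 0 with hF
  have hFmeas : Measurable F := by
    apply Measurable.ite
    · exact measurableSet_le (continuous_dist.comp (continuous_snd.prodMk continuous_fst)).measurable
        measurable_const
    · exact ((CTBker_continuous K₀).comp ((Continuous.prodMk_right x).comp continuous_snd)).measurable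
    · exact measurable_const
  have step1 : ∀ y, CTBker K₀ x y * v ≤ e * ∫⁻ u, F (y, u) := by
    intro y
    have h1 : ∫⁻ u, F (y, u) = ∫⁻ u in closedBall y r, CTBker K₀ x u := by
      rw [← lintegral_indicator measurableSet_closedBall]
      apply lintegral_congr
      intro u
      simp only [hF, Set.indicator_apply, mem_closedBall]
    rw [h1]
    calc CTBker K₀ x y * v = ∫⁻ _ in closedBall y r, CTBker K₀ x y := by
          rw [setLIntegral_const, Measure.addHaar_closedBall_center]
    _ ≤ ∫⁻ u in closedBall y r, e * CTBker K₀ x u := by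
          apply setLIntegral_mono ((CTBker_measurable_snd K₀ x).const_mul e)
          intro u hu
          exact CTBker_near K₀ hr.le (mem_closedBall.mp hu)
    _ = e * ∫⁻ u in closedBall y r, CTBker K₀ x u := by
          rw [lintegral_const_mul e (CTBker_measurable_snd K₀ x)]
  calc (∫⁻ y, CTBker K₀ x y ∂N) * v = ∫⁻ y, CTBker K₀ x y * v ∂N := by
        rw [lintegral_mul_const v (CTBker_measurable_snd K₀ x)]
  _ ≤ ∫⁻ y, (e * ∫⁻ u, F (y, u)) ∂N := lintegral_mono step1
  _ = e * ∫⁻ y, (∫⁻ u, F (y, u)) ∂N := by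
        rw [lintegral_const_mul e]
        exact hFmeas.lintegral_prod_right'
  _ = e * ∫⁻ u, (∫⁻ y, F (y, u) ∂N) := by
        rw [lintegral_lintegral_swap hFmeas.aemeasurable]
  _ ≤ e * (ENNReal.ofReal (c₃ * C₀) * Jd * ENNReal.ofReal (m x)) := by
        apply mul_le_mul_right ?_ e
        have inner : ∀ u, ∫⁻ y, F (y, u) ∂N =
            CTBker K₀ x u * N (closedBall u r) := by
          intro u
          have : ∀ y, F (y, u) = (closedBall u r).indicator (fun _ => CTBker K₀ x u) y := by
            intro y
            simp only [hF, Set.indicator_apply, mem_closedBall]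
            rw [dist_comm]
          simp_rw [this]
          rw [lintegral_indicator_const measurableSet_closedBall]
        calc ∫⁻ u, ∫⁻ y, F (y, u) ∂N = ∫⁻ u, CTBker K₀ x u * N (closedBall u r) := by
              simp_rw [inner]
        _ ≤ ∫⁻ u, ENNReal.ofReal (c₃ * C₀) * (CTBker (d+1) x u * ENNReal.ofReal (m x)) := by
              apply lintegral_mono
              intro u
              have h2 : N (closedBall u r) ≤
                  ENNReal.ofReal (c₃ * (C₀ * (1 + dist u x) ^ ν' * m x)) := by
                refine le_trans (hB u) (ENNReal.ofReal_le_ofReal ?_)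
                exact mul_le_mul_of_nonneg_left (hord' u x) hc₃
              refine le_trans (mul_le_mul_right h2 _) ?_
              have hsplit : CTBker K₀ x u = CTBker ν' x u * CTBker (d+1) x u :=
                CTBker_add ν' (d+1) x u
              rw [hsplit]
              have h3 : ENNReal.ofReal (c₃ * (C₀ * (1 + dist u x) ^ ν' * m x)) =
                  ENNReal.ofReal (c₃ * C₀) * ENNReal.ofReal ((1 + dist u x) ^ ν') *
                    ENNReal.ofReal (m x) := by
                rw [← ENNReal.ofReal_mul (by positivity), ← ENNReal.ofReal_mul (by positivity)]
                ring_nf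
              rw [h3]
              have h4 : CTBker ν' x u * ENNReal.ofReal ((1 + dist u x) ^ ν') ≤ 1 := by
                unfold CTBker
                rw [← ENNReal.ofReal_mul (by positivity), dist_comm x u]
                rw [show (1:ℝ≥0∞) = ENNReal.ofReal 1 by simp]
                apply ENNReal.ofReal_le_ofReal
                rw [inv_mul_le_iff₀ (by positivity)]
                simp
              calc CTBker ν' x u * CTBker (d+1) x u *
                    (ENNReal.ofReal (c₃ * C₀) * ENNReal.ofReal ((1 + dist u x) ^ ν') *
                      ENNReal.ofReal (m x))
                  = (CTBker ν' x u * ENNReal.ofReal ((1 + dist u x) ^ ν')) *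
                    (ENNReal.ofReal (c₃ * C₀) * (CTBker (d+1) x u * ENNReal.ofReal (m x))) := by
                    ring
                _ ≤ 1 * (ENNReal.ofReal (c₃ * C₀) * (CTBker (d+1) x u * ENNReal.ofReal (m x))) :=
                    mul_le_mul_left h4 _
                _ = ENNReal.ofReal (c₃ * C₀) * (CTBker (d+1) x u * ENNReal.ofReal (m x)) :=
                    one_mul _
        _ = ENNReal.ofReal (c₃ * C₀) * Jd * ENNReal.ofReal (m x) := by
              rw [lintegral_const_mul _ ((CTBker_measurable_snd (d+1) x).mul_const _),
                lintegral_mul_const _ (CTBker_measurable_snd (d+1) x)]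
              unfold CTBker
              rw [my_translate x]
              ring

/-- The cross term `∫_Ω ∫_{Ωᶜ} ρ(x-y) dN(y) dx` is controlled by the integral of the
order function over the unit thickening of the boundary of `Ω`. -/
theorem cross_term_bound {d : ℕ} (m : EuclideanSpace ℝ (Fin d) → ℝ)
    (hm : IsOrderFunction m)
    (N : Measure (EuclideanSpace ℝ (Fin d))) [IsLocallyFiniteMeasure N]
    (hN : IsTempered N)
    (ρ : SchwartzMap (EuclideanSpace ℝ (Fin d)) ℝ)
    (hρpos : ∀ x, 0 ≤ ρ x) (hρint : ∫ x, ρ x = 1) (hρ0 : 0 < ρ 0)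
    (hbound : ∀ x, mconv N (fun z => ρ z) x ≤ m x) :
    ∃ C : ℝ, 0 < C ∧ ∀ Ω : Set (EuclideanSpace ℝ (Fin d)), MeasurableSet Ω →
      ∫⁻ x in Ω, (∫⁻ y in Ωᶜ, ENNReal.ofReal (ρ (x - y)) ∂N) ≤
        ENNReal.ofReal C * ∫⁻ x in unitThick Ω, ENNReal.ofReal (m x) := by
  obtain ⟨hmpos, C₀, ν, hC₀, hν, hord⟩ := hm
  set ν' : ℕ := ⌈ν⌉₊ with hν'
  have hord' : ∀ x y, m x ≤ C₀ * (1 + dist x y) ^ ν' * m y := by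
    intro x y
    refine le_trans (hord x y) ?_
    rw [dist_eq_norm]
    apply mul_le_mul_of_nonneg_right ?_ (hmpos y).le
    apply mul_le_mul_of_nonneg_left ?_ hC₀.le
    rw [← Real.rpow_natCast (1 + ‖x - y‖) ν']
    apply Real.rpow_le_rpow_of_exponent_le (by linarith [norm_nonneg (x - y)])
    exact Nat.le_ceil ν
  -- small ball lower bound for ρ near 0
  obtain ⟨r, hr, hball⟩ : ∃ r : ℝ, 0 < r ∧
      ∀ z : EuclideanSpace ℝ (Fin d), ‖z‖ ≤ r → ρ 0 / 2 ≤ ρ z := by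
    have hc := ρ.continuous.continuousAt (x := 0)
    rw [Metric.continuousAt_iff] at hc
    obtain ⟨δ, hδ, h⟩ := hc (ρ 0 / 2) (by linarith)
    refine ⟨δ/2, by linarith, fun z hz => ?_⟩
    have h2 := h (show dist z 0 < δ by rw [dist_zero_right]; linarith)
    rw [Real.dist_eq] at h2
    have h3 := abs_lt.mp h2
    linarith [h3.1]
  set K₀ : ℕ := ν' + (d + 1) with hK₀def
  set Ka : ℕ := K₀ + (d + 1) with hKadef
  obtain ⟨D, hD, hdec⟩ := my_schwartz_decay' ρ (Ka + K₀)
  have hballN : ∀ u, N (closedBall u r) ≤ ENNReal.ofReal ((2 / ρ 0) * m u) :=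
    fun u => CTB_ball_bound hN hρpos hbound hmpos hρ0 hball u
  obtain ⟨B₁, hB₁t, hpoly⟩ := CTB_poly_bound N m hC₀ hord' hr
    (by positivity) hballN
  set M : EuclideanSpace ℝ (Fin d) → ℝ≥0∞ := fun x => ∫⁻ y, CTBker K₀ x y ∂N with hM
  have hMmeas : Measurable M :=
    Measurable.lintegral_prod_right' (CTBker_continuous K₀).measurable
  have hMorder : ∀ x w, M x ≤ ENNReal.ofReal ((1 + dist x w) ^ K₀) * M w := by
    intro x w
    calc M x ≤ ∫⁻ y, ENNReal.ofReal ((1 + dist x w) ^ K₀) * CTBker K₀ w y ∂N :=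
      lintegral_mono fun y => CTBker_transfer K₀ x y w
    _ = _ := lintegral_const_mul _ (CTBker_measurable_snd K₀ w)
  set v : ℝ≥0∞ := volume (closedBall (0 : EuclideanSpace ℝ (Fin d)) (1/2)) with hvdef
  have hv0 : v ≠ 0 := (measure_closedBall_pos _ _ (by norm_num)).ne'
  have hvt : v ≠ ⊤ := measure_closedBall_lt_top.ne
  set c₂ : ℝ≥0∞ := ENNReal.ofReal D * ENNReal.ofReal ((2:ℝ) ^ Ka) with hc₂
  have hc₂t : c₂ ≠ ⊤ := ENNReal.mul_ne_top ENNReal.ofReal_ne_top ENNReal.ofReal_ne_top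
  set Jd1 : ℝ≥0∞ := ∫⁻ z : EuclideanSpace ℝ (Fin d), ENNReal.ofReal (((1 + ‖z‖) ^ (d+1))⁻¹)
    with hJd1
  have hJd1t : Jd1 ≠ ⊤ := (my_J_lt_top (by omega)).ne
  set A : ℝ≥0∞ := c₂ / v * Jd1 * B₁ with hA
  have hAt : A ≠ ⊤ := by
    apply ENNReal.mul_ne_top (ENNReal.mul_ne_top ?_ hJd1t) hB₁t
    exact (ENNReal.div_lt_top hc₂t hv0).ne
  refine ⟨A.toReal + 1, by positivity, ?_⟩
  intro Ω hΩ
  set U : Set (EuclideanSpace ℝ (Fin d)) := unitThick Ω with hUdef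
  have hU : MeasurableSet U := my_measurable_unitThick Ω
  set ψ : EuclideanSpace ℝ (Fin d) → ℝ≥0∞ := fun x => ∫⁻ w in U, CTBker Ka x w with hψ
  have hψmeas : Measurable ψ :=
    Measurable.lintegral_prod_right' (ν := volume.restrict U) (CTBker_continuous Ka).measurable
  -- Step 8: pointwise geometric bound
  have step8 : ∀ x ∈ Ω, ∀ y ∈ Ωᶜ, ENNReal.ofReal (ρ (x - y)) * v ≤
      c₂ * (CTBker K₀ x y * ψ x) := by
    intro x hx y hy
    obtain ⟨z, hz1, hz2, hzd⟩ := my_cross hx hy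
    set S : Set (EuclideanSpace ℝ (Fin d)) := {w | dist w x ≤ dist x y + 1} with hS
    have hSmeas : MeasurableSet S :=
      measurableSet_le (continuous_dist.comp (continuous_id.prodMk continuous_const)).measurable
        measurable_const
    have hsub : closedBall z (1/2) ⊆ U ∩ S := by
      intro w hw
      refine ⟨my_ball_subset hz1 hz2 hw, ?_⟩
      have h1 : dist w z ≤ 1/2 := mem_closedBall.mp hw
      have h2 : dist w x ≤ dist w z + dist z x := dist_triangle w z x
      have h3 : dist z x ≤ dist x y := by rw [dist_comm]; exact hzd
      simp only [hS, mem_setOf_eq]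
      linarith
    have hvol : v ≤ volume (U ∩ S) := by
      rw [hvdef, ← Measure.addHaar_closedBall_center volume z]
      exact measure_mono hsub
    have hptw : ∀ w ∈ U ∩ S, ENNReal.ofReal (ρ (x - y)) ≤
        c₂ * (CTBker K₀ x y * CTBker Ka x w) := by
      intro w hw
      have hρxy : ENNReal.ofReal (ρ (x - y)) ≤ ENNReal.ofReal D * CTBker (Ka + K₀) x y := by
        unfold CTBker
        rw [← ENNReal.ofReal_mul hD.le]
        apply ENNReal.ofReal_le_ofReal
        calc ρ (x - y) ≤ ‖ρ (x - y)‖ := le_abs_self _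
        _ ≤ D * ((1 + ‖x - y‖) ^ (Ka + K₀))⁻¹ := hdec _
        _ = D * ((1 + dist x y) ^ (Ka + K₀))⁻¹ := by rw [dist_eq_norm]
      have hKsplit : CTBker (Ka + K₀) x y = CTBker Ka x y * CTBker K₀ x y :=
        CTBker_add Ka K₀ x y
      have htwo : CTBker Ka x y ≤ ENNReal.ofReal ((2:ℝ) ^ Ka) * CTBker Ka x w :=
        CTBker_two Ka hw.2
      calc ENNReal.ofReal (ρ (x - y)) ≤ ENNReal.ofReal D * CTBker (Ka + K₀) x y := hρxy
      _ = ENNReal.ofReal D * (CTBker Ka x y * CTBker K₀ x y) := by rw [hKsplit]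
      _ ≤ ENNReal.ofReal D * ((ENNReal.ofReal ((2:ℝ) ^ Ka) * CTBker Ka x w) * CTBker K₀ x y) :=
          mul_le_mul_right (mul_le_mul_left htwo _) _
      _ = c₂ * (CTBker K₀ x y * CTBker Ka x w) := by rw [hc₂]; ring
    calc ENNReal.ofReal (ρ (x - y)) * v ≤ ENNReal.ofReal (ρ (x - y)) * volume (U ∩ S) :=
          mul_le_mul_right hvol _
    _ = ∫⁻ _ in U ∩ S, ENNReal.ofReal (ρ (x - y)) := (setLIntegral_const _ _).symm
    _ ≤ ∫⁻ w in U ∩ S, c₂ * (CTBker K₀ x y * CTBker Ka x w) := by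
        apply setLIntegral_mono (((CTBker_measurable_snd Ka x).const_mul _).const_mul c₂)
        exact hptw
    _ ≤ ∫⁻ w in U, c₂ * (CTBker K₀ x y * CTBker Ka x w) :=
        lintegral_mono' (Measure.restrict_mono inter_subset_left le_rfl) le_rfl
    _ = c₂ * (CTBker K₀ x y * ψ x) := by
        rw [lintegral_const_mul c₂ ((CTBker_measurable_snd Ka x).const_mul _),
          lintegral_const_mul _ (CTBker_measurable_snd Ka x)]
  -- Step 9: bound the inner integral
  have step9 : ∀ x ∈ Ω, (∫⁻ y in Ωᶜ, ENNReal.ofReal (ρ (x - y)) ∂N) ≤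
      c₂ / v * ψ x * M x := by
    intro x hx
    have hptw : ∀ y ∈ Ωᶜ, ENNReal.ofReal (ρ (x - y)) ≤ (c₂ / v * ψ x) * CTBker K₀ x y := by
      intro y hy
      have h1 := step8 x hx y hy
      rw [← ENNReal.le_div_iff_mul_le (Or.inl hv0) (Or.inl hvt)] at h1
      refine le_trans h1 (le_of_eq ?_)
      rw [div_eq_mul_inv, div_eq_mul_inv]; ring
    calc (∫⁻ y in Ωᶜ, ENNReal.ofReal (ρ (x - y)) ∂N)
        ≤ ∫⁻ y in Ωᶜ, (c₂ / v * ψ x) * CTBker K₀ x y ∂N := by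
          apply lintegral_mono_ae
          filter_upwards [ae_restrict_mem hΩ.compl] with y hy
          exact hptw y hy
    _ ≤ ∫⁻ y, (c₂ / v * ψ x) * CTBker K₀ x y ∂N :=
        lintegral_mono' Measure.restrict_le_self le_rfl
    _ = (c₂ / v * ψ x) * M x := lintegral_const_mul _ (CTBker_measurable_snd K₀ x)
    _ = c₂ / v * ψ x * M x := rfl
  -- Step 10: pointwise transfer of M from x to the boundary layer
  have step10 : ∀ x, ψ x * M x ≤ ∫⁻ w in U, CTBker (d+1) x w * M w := by
    intro x
    calc ψ x * M x = ∫⁻ w in U, CTBker Ka x w * M x := by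
          rw [lintegral_mul_const _ (CTBker_measurable_snd Ka x)]
    _ ≤ ∫⁻ w in U, CTBker (d+1) x w * M w := by
        apply lintegral_mono
        intro w
        have h1 : M x ≤ ENNReal.ofReal ((1 + dist x w) ^ K₀) * M w := hMorder x w
        have hKa : CTBker Ka x w = CTBker (d+1) x w * CTBker K₀ x w := by
          rw [hKadef, add_comm K₀ (d+1)]
          exact CTBker_add (d+1) K₀ x w
        have h4 : CTBker K₀ x w * ENNReal.ofReal ((1 + dist x w) ^ K₀) ≤ 1 := by
          unfold CTBker
          rw [← ENNReal.ofReal_mul (by positivity)]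
          rw [show (1:ℝ≥0∞) = ENNReal.ofReal 1 by simp]
          apply ENNReal.ofReal_le_ofReal
          rw [inv_mul_le_iff₀ (by positivity)]
          simp
        calc CTBker Ka x w * M x
            ≤ CTBker Ka x w * (ENNReal.ofReal ((1 + dist x w) ^ K₀) * M w) :=
              mul_le_mul_right h1 _
        _ = (CTBker K₀ x w * ENNReal.ofReal ((1 + dist x w) ^ K₀)) *
              (CTBker (d+1) x w * M w) := by rw [hKa]; ring
        _ ≤ 1 * (CTBker (d+1) x w * M w) := mul_le_mul_left h4 _
        _ = CTBker (d+1) x w * M w := one_mul _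
  -- Step 11: swap and integrate out x
  have step11 : (∫⁻ x, ∫⁻ w in U, CTBker (d+1) x w * M w) ≤ Jd1 * ∫⁻ w in U, M w := by
    have hswap : (∫⁻ x, ∫⁻ w in U, CTBker (d+1) x w * M w) =
        ∫⁻ w in U, (∫⁻ x, CTBker (d+1) x w * M w) := by
      apply lintegral_lintegral_swap
      apply Measurable.aemeasurable
      exact ((CTBker_continuous (d+1)).measurable).mul (hMmeas.comp measurable_snd)
    rw [hswap]
    have hinner : ∀ w, (∫⁻ x, CTBker (d+1) x w * M w) = Jd1 * M w := by
      intro w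
      rw [lintegral_mul_const _ (CTBker_measurable_fst (d+1) w)]
      have h5 : (∫⁻ x, CTBker (d+1) x w) = Jd1 := by
        unfold CTBker
        calc (∫⁻ x, ENNReal.ofReal (((1 + dist x w) ^ (d+1))⁻¹))
            = ∫⁻ x, ENNReal.ofReal (((1 + dist w x) ^ (d+1))⁻¹) := by
              apply lintegral_congr; intro x; rw [dist_comm]
        _ = Jd1 := my_translate w
      rw [h5, mul_comm]
    calc (∫⁻ w in U, (∫⁻ x, CTBker (d+1) x w * M w)) = ∫⁻ w in U, Jd1 * M w := by
          apply lintegral_congr; intro w; exact hinner w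
    _ = Jd1 * ∫⁻ w in U, M w := lintegral_const_mul Jd1 hMmeas
    _ ≤ Jd1 * ∫⁻ w in U, M w := le_rfl
  -- Assemble
  have main : (∫⁻ x in Ω, (∫⁻ y in Ωᶜ, ENNReal.ofReal (ρ (x - y)) ∂N)) ≤
      A * ∫⁻ x in U, ENNReal.ofReal (m x) := by
    calc (∫⁻ x in Ω, (∫⁻ y in Ωᶜ, ENNReal.ofReal (ρ (x - y)) ∂N))
        ≤ ∫⁻ x in Ω, c₂ / v * (ψ x * M x) := by
          apply lintegral_mono_ae
          filter_upwards [ae_restrict_mem hΩ] with x hx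
          refine le_trans (step9 x hx) (le_of_eq ?_)
          ring
    _ ≤ ∫⁻ x, c₂ / v * (ψ x * M x) := lintegral_mono' Measure.restrict_le_self le_rfl
    _ = c₂ / v * ∫⁻ x, ψ x * M x :=
        lintegral_const_mul _ (hψmeas.mul hMmeas)
    _ ≤ c₂ / v * ∫⁻ x, ∫⁻ w in U, CTBker (d+1) x w * M w := by
        apply mul_le_mul_right
        exact lintegral_mono step10
    _ ≤ c₂ / v * (Jd1 * ∫⁻ w in U, M w) := mul_le_mul_right step11 _
    _ ≤ c₂ / v * (Jd1 * ∫⁻ w in U, B₁ * ENNReal.ofReal (m w)) := by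
        apply mul_le_mul_right
        apply mul_le_mul_right
        exact lintegral_mono fun w => hpoly w
    _ = c₂ / v * (Jd1 * (B₁ * ∫⁻ w in U, ENNReal.ofReal (m w))) := by
        rw [lintegral_const_mul' B₁ _ hB₁t]
    _ = A * ∫⁻ x in U, ENNReal.ofReal (m x) := by
        rw [hA]; ring
  refine le_trans main (mul_le_mul_left ?_ _)
  calc A = ENNReal.ofReal A.toReal := (ENNReal.ofReal_toReal hAt).symm
  _ ≤ ENNReal.ofReal (A.toReal + 1) := ENNReal.ofReal_le_ofReal (by linarith)

end
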